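/- Let (Q_i), (a_i) be positive sequences and 0 < z < z_s with Q_{i+1}/Q_i → 1/z_s, a_{i+1}/a_i → 1, and inf_i a_i > 0. Set 𝒬_i = Q_i z^i. Then B := sup_{k≥1} (∑_{j=k+1}^∞ 𝒬_j)(∑_{j=1}^k 1/(a_j 𝒬_j)) is finite. -/

import Mathlib

/-- Finiteness of the Hardy constant `B` in the strictly subcritical regime: if
`Q_{i+1}/Q_i → 1/z_s`, `a_{i+1}/a_i → 1`, `inf a_i > 0` and `0 < z < z_s`, then with
`𝒬_i = Q_i z^i`, `B := sup_{k≥1} (∑_{j=k+1}^∞ 𝒬_j)(∑_{j=1}^k 1/(a_j 𝒬_j))` is finite. -/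
theorem stmt_12 (Q a : ℕ → ℝ) (hQ : ∀ i, 0 < Q i) (ha : ∀ i, 0 < a i)
    (z zs : ℝ) (hz : 0 < z) (hzzs : z < zs)
    (hQlim : Filter.Tendsto (fun i : ℕ => Q (i + 1) / Q i) Filter.atTop (nhds (1 / zs)))
    (halim : Filter.Tendsto (fun i : ℕ => a (i + 1) / a i) Filter.atTop (nhds 1))
    (hainf : ∃ a₀ : ℝ, 0 < a₀ ∧ ∀ i, a₀ ≤ a i) :
    ∃ B : ℝ, ∀ k : ℕ, 1 ≤ k →
      (∑' j : ℕ, Q (k + 1 + j) * z ^ (k + 1 + j)) *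
        (∑ j ∈ Finset.Icc 1 k, 1 / (a j * (Q j * z ^ j))) ≤ B := by
  obtain ⟨a₀, ha₀, ha₀le⟩ := hainf
  have hzs : (0:ℝ) < zs := hz.trans hzzs
  set 𝒬 : ℕ → ℝ := fun j => Q j * z ^ j with h𝒬def
  have h𝒬pos : ∀ j, 0 < 𝒬 j := fun j => mul_pos (hQ j) (pow_pos hz j)
  set q : ℝ := z / zs with hqdef
  have hq0 : 0 < q := div_pos hz hzs
  have hq1 : q < 1 := (div_lt_one hzs).mpr hzzs
  set ρ : ℝ := (q + 1) / 2 with hρdef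
  set ρ' : ℝ := (ρ + 1) / 2 with hρ'def
  have hqρ : q < ρ := by rw [hρdef]; linarith
  have hρ0 : 0 < ρ := by rw [hρdef]; linarith
  have hρ1 : ρ < 1 := by rw [hρdef]; linarith
  have hρρ' : ρ < ρ' := by rw [hρ'def]; linarith
  have hρ'0 : 0 < ρ' := by rw [hρ'def]; linarith
  have hρ'1 : ρ' < 1 := by rw [hρ'def]; linarith
  clear_value ρ'
  clear_value ρ
  -- ratio of 𝒬 tends to q
  have h1 : Filter.Tendsto (fun j : ℕ => 𝒬 (j + 1) / 𝒬 j) Filter.atTop (nhds q) := by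
    have h := hQlim.mul_const z
    have heq : (1 / zs) * z = q := by rw [hqdef]; field_simp
    rw [heq] at h
    refine h.congr fun j => ?_
    have hQj := (hQ j).ne'
    have hzj : z ^ j ≠ 0 := (pow_pos hz j).ne'
    simp only [h𝒬def, pow_succ]
    field_simp
  -- ratio of a·𝒬 tends to q
  have h2 : Filter.Tendsto (fun j : ℕ => (a (j + 1) * 𝒬 (j + 1)) / (a j * 𝒬 j))
      Filter.atTop (nhds q) := by
    have h := halim.mul h1
    rw [one_mul] at h
    refine h.congr fun j => ?_
    rw [div_mul_div_comm]
  obtain ⟨N1, hN1⟩ := Filter.eventually_atTop.mp (h1.eventually_lt_const hqρ)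
  obtain ⟨N2, hN2⟩ := Filter.eventually_atTop.mp (h2.eventually_lt_const (hqρ.trans hρρ'))
  have hstep1 : ∀ j, N1 ≤ j → 𝒬 (j + 1) ≤ ρ * 𝒬 j := by
    intro j hj
    have := (hN1 j hj).le
    rwa [div_le_iff₀ (h𝒬pos j)] at this
  have hstep2 : ∀ j, N2 ≤ j → a (j + 1) * 𝒬 (j + 1) ≤ ρ' * (a j * 𝒬 j) := by
    intro j hj
    have := (hN2 j hj).le
    rwa [div_le_iff₀ (mul_pos (ha j) (h𝒬pos j))] at this
  -- geometric decay of 𝒬 past N1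
  have hgeo : ∀ j, N1 ≤ j → ∀ m : ℕ, 𝒬 (j + m) ≤ 𝒬 j * ρ ^ m := by
    intro j hj m
    induction m with
    | zero => simp
    | succ m ih =>
      have h1' : 𝒬 (j + m + 1) ≤ ρ * 𝒬 (j + m) :=
        hstep1 (j + m) (hj.trans (Nat.le_add_right _ _))
      have : ρ * 𝒬 (j + m) ≤ ρ * (𝒬 j * ρ ^ m) := by
        exact mul_le_mul_of_nonneg_left ih hρ0.le
      calc 𝒬 (j + (m + 1)) = 𝒬 (j + m + 1) := by ring_nf
        _ ≤ ρ * (𝒬 j * ρ ^ m) := h1'.trans this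
        _ = 𝒬 j * ρ ^ (m + 1) := by ring
  set c : ℕ → ℝ := fun j => 1 / (a j * 𝒬 j) with hcdef
  have hcpos : ∀ j, 0 < c j := fun j => by
    exact one_div_pos.mpr (mul_pos (ha j) (h𝒬pos j))
  have hcstep : ∀ j, N2 ≤ j → c j ≤ ρ' * c (j + 1) := by
    intro j hj
    have hd := hstep2 j hj
    have hdj : 0 < a j * 𝒬 j := mul_pos (ha j) (h𝒬pos j)
    have hdj1 : 0 < a (j + 1) * 𝒬 (j + 1) := mul_pos (ha _) (h𝒬pos _)
    show (1:ℝ) / (a j * 𝒬 j) ≤ ρ' * (1 / (a (j + 1) * 𝒬 (j + 1)))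
    rw [mul_one_div, div_le_div_iff₀ hdj hdj1, one_mul]
    nlinarith [hd, hdj.le, hdj1.le]
  set N : ℕ := max N1 N2 with hNdef
  set S0 : ℝ := ∑ j ∈ Finset.Icc 1 N, c j with hS0def
  have hS0nonneg : 0 ≤ S0 := Finset.sum_nonneg fun j _ => (hcpos j).le
  -- partial sum bound for k ≥ N
  have hsum : ∀ k, N ≤ k → ∑ j ∈ Finset.Icc 1 k, c j ≤ S0 + c k * (1 - ρ')⁻¹ := by
    intro k hk
    induction k, hk using Nat.le_induction with
    | base =>
      have : 0 ≤ c N * (1 - ρ')⁻¹ :=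
        mul_nonneg (hcpos N).le (inv_nonneg.mpr (by linarith))
      linarith
    | succ k hk ih =>
      rw [Finset.sum_Icc_succ_top (Nat.one_le_iff_ne_zero.mpr (Nat.succ_ne_zero k))]
      have hck : c k ≤ ρ' * c (k + 1) :=
        hcstep k (le_trans (le_max_right N1 N2) hk)
      have hinv : 0 < (1 - ρ')⁻¹ := inv_pos.mpr (by linarith)
      have key : c k * (1 - ρ')⁻¹ + c (k + 1) ≤ c (k + 1) * (1 - ρ')⁻¹ := by
        have h10 : (1:ℝ) - ρ' ≠ 0 := by linarith
        have hid : ρ' * (1 - ρ')⁻¹ + 1 = (1 - ρ')⁻¹ := by field_simp; ring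
        calc c k * (1 - ρ')⁻¹ + c (k + 1)
            ≤ ρ' * c (k + 1) * (1 - ρ')⁻¹ + c (k + 1) := by
              nlinarith [mul_le_mul_of_nonneg_right hck hinv.le]
          _ = c (k + 1) * (ρ' * (1 - ρ')⁻¹ + 1) := by ring
          _ = c (k + 1) * (1 - ρ')⁻¹ := by rw [hid]
      linarith
  -- tail bound for k ≥ N
  have hN1N : N1 ≤ N := le_max_left _ _
  have htail : ∀ k, N ≤ k → (∑' j : ℕ, 𝒬 (k + 1 + j)) ≤ 𝒬 (k + 1) * (1 - ρ)⁻¹ := by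
    intro k hk
    have hk1 : N1 ≤ k + 1 := le_trans (hN1N.trans hk) (Nat.le_succ k)
    have hterm : ∀ j : ℕ, 𝒬 (k + 1 + j) ≤ 𝒬 (k + 1) * ρ ^ j := fun j => hgeo (k + 1) hk1 j
    have hsummable_geo : Summable (fun j : ℕ => 𝒬 (k + 1) * ρ ^ j) :=
      (summable_geometric_of_lt_one hρ0.le hρ1).mul_left _
    have hsummable : Summable (fun j : ℕ => 𝒬 (k + 1 + j)) :=
      Summable.of_nonneg_of_le (fun j => (h𝒬pos _).le) hterm hsummable_geo
    calc (∑' j : ℕ, 𝒬 (k + 1 + j)) ≤ ∑' j : ℕ, 𝒬 (k + 1) * ρ ^ j :=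
          Summable.tsum_le_tsum hterm hsummable hsummable_geo
      _ = 𝒬 (k + 1) * (1 - ρ)⁻¹ := by
          rw [tsum_mul_left, tsum_geometric_of_lt_one hρ0.le hρ1]
  -- nonnegativity of the quantity
  set f : ℕ → ℝ := fun k => (∑' j : ℕ, 𝒬 (k + 1 + j)) * (∑ j ∈ Finset.Icc 1 k, c j)
    with hfdef
  have hfnonneg : ∀ k, 0 ≤ f k := by
    intro k
    exact mul_nonneg (tsum_nonneg fun j => (h𝒬pos _).le)
      (Finset.sum_nonneg fun j _ => (hcpos j).le)
  -- the bound for k ≥ N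
  set B1 : ℝ := 𝒬 N * (1 - ρ)⁻¹ * S0 + (1 - ρ)⁻¹ * (1 - ρ')⁻¹ * ρ * a₀⁻¹ with hB1def
  have hinvρ : 0 < (1 - ρ)⁻¹ := inv_pos.mpr (by linarith)
  have hinvρ' : 0 < (1 - ρ')⁻¹ := inv_pos.mpr (by linarith)
  have hB1nonneg : 0 ≤ B1 := by
    rw [hB1def]
    have h1' : 0 ≤ 𝒬 N * (1 - ρ)⁻¹ * S0 :=
      mul_nonneg (mul_nonneg (h𝒬pos N).le hinvρ.le) hS0nonneg
    have h2' : 0 ≤ (1 - ρ)⁻¹ * (1 - ρ')⁻¹ * ρ * a₀⁻¹ :=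
      mul_nonneg (mul_nonneg (mul_nonneg hinvρ.le hinvρ'.le) hρ0.le) (inv_pos.mpr ha₀).le
    linarith
  have hlarge : ∀ k, N ≤ k → f k ≤ B1 := by
    intro k hk
    have htk := htail k hk
    have hsk := hsum k hk
    have htnn : 0 ≤ ∑' j : ℕ, 𝒬 (k + 1 + j) := tsum_nonneg fun j => (h𝒬pos _).le
    have hsnn : 0 ≤ ∑ j ∈ Finset.Icc 1 k, c j := Finset.sum_nonneg fun j _ => (hcpos j).le
    have hmul : f k ≤ (𝒬 (k + 1) * (1 - ρ)⁻¹) * (S0 + c k * (1 - ρ')⁻¹) := by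
      exact mul_le_mul htk hsk hsnn (mul_nonneg (h𝒬pos _).le hinvρ.le)
    -- 𝒬 (k+1) ≤ 𝒬 N and 𝒬 (k+1) ≤ ρ * 𝒬 k
    have hQkN : 𝒬 (k + 1) ≤ 𝒬 N := by
      have h := hgeo N hN1N (k + 1 - N)
      rw [Nat.add_sub_cancel' (hk.trans (Nat.le_succ k))] at h
      calc 𝒬 (k + 1) ≤ 𝒬 N * ρ ^ (k + 1 - N) := h
        _ ≤ 𝒬 N * 1 := by
            exact mul_le_mul_of_nonneg_left (pow_le_one₀ hρ0.le hρ1.le) (h𝒬pos N).le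
        _ = 𝒬 N := mul_one _
    have hQkρ : 𝒬 (k + 1) ≤ ρ * 𝒬 k := hstep1 k (hN1N.trans hk)
    have hck : 𝒬 k * c k = 1 / a k := by
      show 𝒬 k * (1 / (a k * 𝒬 k)) = 1 / a k
      rw [mul_comm (a k) (𝒬 k), one_div, mul_inv, ← mul_assoc,
        mul_inv_cancel₀ (h𝒬pos k).ne', one_mul, one_div]
    have hak : 1 / a k ≤ a₀⁻¹ := by
      rw [one_div]
      exact inv_anti₀ ha₀ (ha₀le k)
    have hterm1 : 𝒬 (k + 1) * (1 - ρ)⁻¹ * S0 ≤ 𝒬 N * (1 - ρ)⁻¹ * S0 := by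
      apply mul_le_mul_of_nonneg_right _ hS0nonneg
      exact mul_le_mul_of_nonneg_right hQkN hinvρ.le
    have hterm2 : 𝒬 (k + 1) * (1 - ρ)⁻¹ * (c k * (1 - ρ')⁻¹) ≤
        (1 - ρ)⁻¹ * (1 - ρ')⁻¹ * ρ * a₀⁻¹ := by
      have h1' : 𝒬 (k + 1) * c k ≤ ρ * (1 / a k) := by
        calc 𝒬 (k + 1) * c k ≤ (ρ * 𝒬 k) * c k :=
              mul_le_mul_of_nonneg_right hQkρ (hcpos k).le
          _ = ρ * (𝒬 k * c k) := by ring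
          _ = ρ * (1 / a k) := by rw [hck]
      have h2' : ρ * (1 / a k) ≤ ρ * a₀⁻¹ := mul_le_mul_of_nonneg_left hak hρ0.le
      have h3' : 𝒬 (k + 1) * c k ≤ ρ * a₀⁻¹ := h1'.trans h2'
      calc 𝒬 (k + 1) * (1 - ρ)⁻¹ * (c k * (1 - ρ')⁻¹)
          = (𝒬 (k + 1) * c k) * ((1 - ρ)⁻¹ * (1 - ρ')⁻¹) := by ring
        _ ≤ (ρ * a₀⁻¹) * ((1 - ρ)⁻¹ * (1 - ρ')⁻¹) := by
            apply mul_le_mul_of_nonneg_right h3'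
            positivity
        _ = (1 - ρ)⁻¹ * (1 - ρ')⁻¹ * ρ * a₀⁻¹ := by ring
    calc f k ≤ (𝒬 (k + 1) * (1 - ρ)⁻¹) * (S0 + c k * (1 - ρ')⁻¹) := hmul
      _ = 𝒬 (k + 1) * (1 - ρ)⁻¹ * S0 + 𝒬 (k + 1) * (1 - ρ)⁻¹ * (c k * (1 - ρ')⁻¹) := by
          ring
      _ ≤ B1 := by rw [hB1def]; linarith
  refine ⟨B1 + ∑ k ∈ Finset.Icc 1 N, f k, fun k hk => ?_⟩
  have hfsum : 0 ≤ ∑ k ∈ Finset.Icc 1 N, f k := Finset.sum_nonneg fun j _ => hfnonneg j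
  have hfk : (∑' j : ℕ, Q (k + 1 + j) * z ^ (k + 1 + j)) *
      (∑ j ∈ Finset.Icc 1 k, 1 / (a j * (Q j * z ^ j))) = f k := rfl
  rw [hfk]
  rcases le_total k N with hkN | hkN
  · have : f k ≤ ∑ k' ∈ Finset.Icc 1 N, f k' :=
      Finset.single_le_sum (fun j _ => hfnonneg j) (Finset.mem_Icc.mpr ⟨hk, hkN⟩)
    linarith
  · have := hlarge k hkN
    linarith
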